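/- In any controlled hidden Markov model with output-feedback policy over horizon T ≥ 1, the smoother entropy satisfies the one-step recursion H(X^T | Y^T, U^{T-1}) = H(X^{T-1} | Y^{T-1}, U^{T-2}) + H(X_T | Y^T, U^{T-1}) − H(X_T | Y^{T-1}, U^{T-1}) + H(X_T | X_{T-1}, U_{T-1}), where for T = 1 the term H(X^{0} | Y^{0}, U^{-1}) is interpreted as H(X_0 | Y_0). -/

import Mathlib

open Finset

/-- Trajectory space of a controlled HMM over horizon `T`:
states `x_0,…,x_T`, measurements `y_0,…,y_T`, controls `u_0,…,u_{T-1}`. -/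
abbrev Traj (T : ℕ) (X Y U : Type*) : Type _ :=
  (Fin (T + 1) → X) × (Fin (T + 1) → Y) × (Fin T → U)

/-- A controlled hidden Markov model with output-feedback policy over horizon `T`,
with finite state space `X`, measurement space `Y` and control space `U`.
`f t x' x u = f_t(x' | x, u)`, `g0 y x = g₀(y | x)`, `g t y x u = g_{t+1}(y | x, u_t)`,
and `pol t a ys us = μ_t(a | y^t, u^{t-1})` (causality is imposed by `pol_causal`). -/
structure CHMM (T : ℕ) (X Y U : Type*) [Fintype X] [Fintype Y] [Fintype U] where
  p0 : X → ℝ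
  f : Fin T → X → X → U → ℝ
  g0 : Y → X → ℝ
  g : Fin T → Y → X → U → ℝ
  pol : Fin T → U → (Fin (T + 1) → Y) → (Fin T → U) → ℝ
  p0_nonneg : ∀ x, 0 ≤ p0 x
  p0_sum : ∑ x, p0 x = 1
  f_nonneg : ∀ t x' x u, 0 ≤ f t x' x u
  f_sum : ∀ t x u, ∑ x', f t x' x u = 1
  g0_nonneg : ∀ y x, 0 ≤ g0 y x
  g0_sum : ∀ x, ∑ y, g0 y x = 1
  g_nonneg : ∀ t y x u, 0 ≤ g t y x u
  g_sum : ∀ t x u, ∑ y, g t y x u = 1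
  pol_nonneg : ∀ t a ys us, 0 ≤ pol t a ys us
  pol_sum : ∀ t ys us, ∑ a, pol t a ys us = 1
  pol_causal : ∀ (t : Fin T) (a : U) (ys ys' : Fin (T + 1) → Y) (us us' : Fin T → U),
    (∀ i : Fin (T + 1), (i : ℕ) ≤ (t : ℕ) → ys i = ys' i) →
    (∀ i : Fin T, (i : ℕ) < (t : ℕ) → us i = us' i) →
    pol t a ys us = pol t a ys' us'

variable {T : ℕ} {X Y U : Type*} [Fintype X] [Fintype Y] [Fintype U]
  [DecidableEq X] [DecidableEq Y] [DecidableEq U]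

/-- The joint probability mass function on trajectories induced by a controlled HMM. -/
noncomputable def CHMM.p (M : CHMM T X Y U) (ω : Traj T X Y U) : ℝ :=
  M.p0 (ω.1 0) * M.g0 (ω.2.1 0) (ω.1 0) *
    ∏ t : Fin T,
      (M.pol t (ω.2.2 t) ω.2.1 ω.2.2 *
        M.f t (ω.1 t.succ) (ω.1 t.castSucc) (ω.2.2 t) *
        M.g t (ω.2.1 t.succ) (ω.1 t.succ) (ω.2.2 t))

/-- `M.prob A a = P(A = a)` for a random variable `A` on trajectory space. -/
noncomputable def CHMM.prob (M : CHMM T X Y U) {α : Type*} [DecidableEq α]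
    (A : Traj T X Y U → α) (a : α) : ℝ :=
  ∑ ω : Traj T X Y U, if A ω = a then M.p ω else 0

/-- `M.cprob A a B b = P(A = a | B = b) = P(A = a, B = b) / P(B = b)`. -/
noncomputable def CHMM.cprob (M : CHMM T X Y U) {α β : Type*} [DecidableEq α] [DecidableEq β]
    (A : Traj T X Y U → α) (a : α) (B : Traj T X Y U → β) (b : β) : ℝ :=
  M.prob (fun ω => (A ω, B ω)) (a, b) / M.prob B b

/-- Shannon entropy `H(A)` of a random variable `A` (with `0 log 0 = 0`, as `Real.log 0 = 0`). -/
noncomputable def CHMM.entropy (M : CHMM T X Y U) {α : Type*} [Fintype α] [DecidableEq α]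
    (A : Traj T X Y U → α) : ℝ :=
  -∑ a : α, M.prob A a * Real.log (M.prob A a)

/-- Conditional entropy `H(A | B) = -∑_{a,b} P(A=a,B=b) log P(A=a|B=b)`
(terms with `P(A=a,B=b) = 0`, in particular those with `P(B=b) = 0`, vanish). -/
noncomputable def CHMM.condEnt (M : CHMM T X Y U) {α β : Type*}
    [Fintype α] [DecidableEq α] [Fintype β] [DecidableEq β]
    (A : Traj T X Y U → α) (B : Traj T X Y U → β) : ℝ :=
  -∑ a : α, ∑ b : β,
      M.prob (fun ω => (A ω, B ω)) (a, b) *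
        Real.log (M.prob (fun ω => (A ω, B ω)) (a, b) / M.prob B b)

/-- Conditional mutual information `I(A ; B | C) = H(A | C) - H(A | B, C)`. -/
noncomputable def CHMM.condMI (M : CHMM T X Y U) {α β γ : Type*}
    [Fintype α] [DecidableEq α] [Fintype β] [DecidableEq β] [Fintype γ] [DecidableEq γ]
    (A : Traj T X Y U → α) (B : Traj T X Y U → β) (C : Traj T X Y U → γ) : ℝ :=
  M.condEnt A C - M.condEnt A (fun ω => (B ω, C ω))

/-- Point-wise conditional entropy `h(A | b) = -∑_a P(A=a|B=b) log P(A=a|B=b)`. -/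
noncomputable def CHMM.pcondEnt (M : CHMM T X Y U) {α β : Type*}
    [Fintype α] [DecidableEq α] [DecidableEq β]
    (A : Traj T X Y U → α) (B : Traj T X Y U → β) (b : β) : ℝ :=
  -∑ a : α, M.cprob A a B b * Real.log (M.cprob A a B b)

/-- Point-wise conditional entropy of `A` given the random variable `A'` and the
realization `B = b`:  `h(A | A', b) = -∑_{a,a'} P(A=a,A'=a'|B=b) log P(A=a|A'=a',B=b)`. -/
noncomputable def CHMM.pcondEnt2 (M : CHMM T X Y U) {α α' β : Type*}
    [Fintype α] [DecidableEq α] [Fintype α'] [DecidableEq α'] [DecidableEq β]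
    (A : Traj T X Y U → α) (A' : Traj T X Y U → α') (B : Traj T X Y U → β) (b : β) : ℝ :=
  -∑ a : α, ∑ a' : α',
      M.cprob (fun ω => (A ω, A' ω)) (a, a') B b *
        Real.log (M.prob (fun ω => (A ω, (A' ω, B ω))) (a, (a', b)) /
          M.prob (fun ω => (A' ω, B ω)) (a', b))

/-- The state history `X^{n-1} = (X_0, …, X_{n-1})` as a random variable. -/
def Xpref (T : ℕ) {X Y U : Type*} (n : ℕ) (h : n ≤ T + 1) :
    Traj T X Y U → (Fin n → X) :=
  fun ω i => ω.1 (Fin.castLE h i)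

/-- The measurement history `Y^{n-1} = (Y_0, …, Y_{n-1})` as a random variable. -/
def Ypref (T : ℕ) {X Y U : Type*} (n : ℕ) (h : n ≤ T + 1) :
    Traj T X Y U → (Fin n → Y) :=
  fun ω i => ω.2.1 (Fin.castLE h i)

/-- The control history `U^{n-1} = (U_0, …, U_{n-1})` as a random variable. -/
def Upref (T : ℕ) {X Y U : Type*} (n : ℕ) (h : n ≤ T) :
    Traj T X Y U → (Fin n → U) :=
  fun ω i => ω.2.2 (Fin.castLE h i)

/-- The state `X_t` as a random variable. -/
def Xat (T : ℕ) {X Y U : Type*} (t : ℕ) (h : t < T + 1) : Traj T X Y U → X :=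
  fun ω => ω.1 ⟨t, h⟩

/-- The measurement `Y_t` as a random variable. -/
def Yat (T : ℕ) {X Y U : Type*} (t : ℕ) (h : t < T + 1) : Traj T X Y U → Y :=
  fun ω => ω.2.1 ⟨t, h⟩

/-- The control `U_t` as a random variable. -/
def Uat (T : ℕ) {X Y U : Type*} (t : ℕ) (h : t < T) : Traj T X Y U → U :=
  fun ω => ω.2.2 ⟨t, h⟩

section Infra
set_option linter.unusedSectionVars false

variable {T : ℕ} {X Y U : Type*} [Fintype X] [Fintype Y] [Fintype U]
  [DecidableEq X] [DecidableEq Y] [DecidableEq U]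

namespace CHMM

variable (M : CHMM T X Y U)

lemma p_nonneg (ω : Traj T X Y U) : 0 ≤ M.p ω := by
  unfold CHMM.p
  refine mul_nonneg (mul_nonneg (M.p0_nonneg _) (M.g0_nonneg _ _)) ?_
  exact Finset.prod_nonneg fun t _ =>
    mul_nonneg (mul_nonneg (M.pol_nonneg _ _ _ _) (M.f_nonneg _ _ _ _)) (M.g_nonneg _ _ _ _)

lemma prob_nonneg {α : Type*} [DecidableEq α] (A : Traj T X Y U → α) (a : α) :
    0 ≤ M.prob A a := by
  refine Finset.sum_nonneg fun ω _ => ?_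
  split
  · exact M.p_nonneg ω
  · exact le_rfl

lemma prob_congr {α β : Type*} [DecidableEq α] [DecidableEq β]
    (A : Traj T X Y U → α) (a : α) (B : Traj T X Y U → β) (b : β)
    (h : ∀ ω, A ω = a ↔ B ω = b) : M.prob A a = M.prob B b :=
  Finset.sum_congr rfl fun ω _ => if_congr (h ω) rfl rfl

lemma sum_prob_fst {α β : Type*} [Fintype α] [DecidableEq α] [DecidableEq β]
    (A : Traj T X Y U → α) (B : Traj T X Y U → β) (b : β) :
    ∑ a : α, M.prob (fun ω => (A ω, B ω)) (a, b) = M.prob B b := by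
  unfold CHMM.prob
  rw [Finset.sum_comm]
  refine Finset.sum_congr rfl fun ω _ => ?_
  by_cases h : B ω = b <;> simp [Prod.ext_iff, h]

lemma prob_pair_le {α β : Type*} [Fintype α] [DecidableEq α] [DecidableEq β]
    (A : Traj T X Y U → α) (B : Traj T X Y U → β) (a : α) (b : β) :
    M.prob (fun ω => (A ω, B ω)) (a, b) ≤ M.prob B b := by
  rw [← M.sum_prob_fst A B b]
  exact Finset.single_le_sum (fun a' _ => M.prob_nonneg (fun ω => (A ω, B ω)) (a', b)) (Finset.mem_univ a)

end CHMM

end Infra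
section Infra2
set_option linter.unusedSectionVars false
variable {T : ℕ} {X Y U : Type*} [Fintype X] [Fintype Y] [Fintype U]
  [DecidableEq X] [DecidableEq Y] [DecidableEq U]

namespace CHMM
variable (M : CHMM T X Y U)

lemma condEnt_empty [IsEmpty (Traj T X Y U)] {α β : Type*}
    [Fintype α] [DecidableEq α] [Fintype β] [DecidableEq β]
    (A : Traj T X Y U → α) (B : Traj T X Y U → β) : M.condEnt A B = 0 := by
  simp [CHMM.condEnt, CHMM.prob]

lemma condEnt_congr {α α' β β' : Type*}
    [Fintype α] [DecidableEq α] [Fintype α'] [DecidableEq α']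
    [Fintype β] [DecidableEq β] [Fintype β'] [DecidableEq β']
    (A : Traj T X Y U → α) (A' : Traj T X Y U → α')
    (B : Traj T X Y U → β) (B' : Traj T X Y U → β')
    (eA : α ≃ α') (eB : β ≃ β')
    (hA : ∀ ω, A' ω = eA (A ω)) (hB : ∀ ω, B' ω = eB (B ω)) :
    M.condEnt A' B' = M.condEnt A B := by
  have hpair : ∀ a b, M.prob (fun ω => (A' ω, B' ω)) (eA a, eB b)
      = M.prob (fun ω => (A ω, B ω)) (a, b) := by
    intro a b
    refine M.prob_congr _ _ _ _ fun ω => ?_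
    simp [hA, hB, Prod.ext_iff]
  have hB' : ∀ b, M.prob B' (eB b) = M.prob B b := by
    intro b
    refine M.prob_congr _ _ _ _ fun ω => ?_
    simp [hB]
  unfold CHMM.condEnt
  congr 1
  rw [← Equiv.sum_comp eA]
  refine Finset.sum_congr rfl fun a _ => ?_
  rw [← Equiv.sum_comp eB]
  refine Finset.sum_congr rfl fun b _ => ?_
  rw [hpair, hB']

end CHMM
end Infra2
section Infra3
set_option linter.unusedSectionVars false
variable {T : ℕ} {X Y U : Type*} [Fintype X] [Fintype Y] [Fintype U]
  [DecidableEq X] [DecidableEq Y] [DecidableEq U]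

namespace CHMM
variable (M : CHMM T X Y U)

lemma condEnt_chain {α β γ : Type*}
    [Fintype α] [DecidableEq α] [Fintype β] [DecidableEq β] [Fintype γ] [DecidableEq γ]
    (A : Traj T X Y U → α) (B : Traj T X Y U → β) (C : Traj T X Y U → γ) :
    M.condEnt (fun ω => (A ω, B ω)) C =
      M.condEnt B C + M.condEnt A (fun ω => (B ω, C ω)) := by
  set P3 : α → β → γ → ℝ := fun a b c => M.prob (fun ω => (A ω, B ω, C ω)) (a, b, c) with hP3
  set Pbc : β → γ → ℝ := fun b c => M.prob (fun ω => (B ω, C ω)) (b, c) with hPbc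
  set Pc : γ → ℝ := fun c => M.prob C c with hPc
  have hm : ∀ b c, ∑ a, P3 a b c = Pbc b c := fun b c =>
    M.sum_prob_fst A (fun ω => (B ω, C ω)) (b, c)
  have h3nn : ∀ a b c, 0 ≤ P3 a b c := fun a b c => M.prob_nonneg _ _
  have h3le : ∀ a b c, P3 a b c ≤ Pbc b c := fun a b c =>
    M.prob_pair_le A (fun ω => (B ω, C ω)) a (b, c)
  have hbcle : ∀ b c, Pbc b c ≤ Pc c := fun b c => M.prob_pair_le B C b c
  have e1 : M.condEnt (fun ω => (A ω, B ω)) C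
      = -∑ a, ∑ b, ∑ c, P3 a b c * Real.log (P3 a b c / Pc c) := by
    unfold CHMM.condEnt
    rw [Fintype.sum_prod_type]
    congr 1
    refine Finset.sum_congr rfl fun a _ => Finset.sum_congr rfl fun b _ =>
      Finset.sum_congr rfl fun c _ => ?_
    have : M.prob (fun ω => ((A ω, B ω), C ω)) ((a, b), c) = P3 a b c := by
      refine M.prob_congr _ _ _ _ fun ω => ?_
      simp [Prod.ext_iff, and_assoc]
    rw [this]
  have e2 : M.condEnt A (fun ω => (B ω, C ω))
      = -∑ a, ∑ b, ∑ c, P3 a b c * Real.log (P3 a b c / Pbc b c) := by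
    unfold CHMM.condEnt
    congr 1
    refine Finset.sum_congr rfl fun a _ => ?_
    exact Fintype.sum_prod_type _
  have e3 : M.condEnt B C
      = -∑ a, ∑ b, ∑ c, P3 a b c * Real.log (Pbc b c / Pc c) := by
    unfold CHMM.condEnt
    rw [show (∑ a, ∑ b, ∑ c, P3 a b c * Real.log (Pbc b c / Pc c))
        = ∑ b, ∑ c, (∑ a, P3 a b c) * Real.log (Pbc b c / Pc c) by
      rw [Finset.sum_comm]
      refine Finset.sum_congr rfl fun b _ => ?_
      rw [Finset.sum_comm]
      refine Finset.sum_congr rfl fun c _ => ?_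
      rw [Finset.sum_mul]]
    congr 1
    refine Finset.sum_congr rfl fun b _ => Finset.sum_congr rfl fun c _ => ?_
    rw [hm]
  rw [e1, e2, e3]
  have key : ∀ a b c, P3 a b c * Real.log (P3 a b c / Pc c)
      = P3 a b c * Real.log (Pbc b c / Pc c) + P3 a b c * Real.log (P3 a b c / Pbc b c) := by
    intro a b c
    rcases eq_or_lt_of_le (h3nn a b c) with h0 | hpos
    · rw [← h0]; simp
    · have hbc : 0 < Pbc b c := lt_of_lt_of_le hpos (h3le a b c)
      have hc : 0 < Pc c := lt_of_lt_of_le hbc (hbcle b c)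
      rw [Real.log_div (ne_of_gt hpos) (ne_of_gt hc),
        Real.log_div (ne_of_gt hbc) (ne_of_gt hc),
        Real.log_div (ne_of_gt hpos) (ne_of_gt hbc)]
      ring
  simp only [key]
  rw [← neg_add]
  congr 1
  rw [← Finset.sum_add_distrib]
  refine Finset.sum_congr rfl fun a _ => ?_
  rw [← Finset.sum_add_distrib]
  refine Finset.sum_congr rfl fun b _ => ?_
  rw [← Finset.sum_add_distrib]

end CHMM
end Infra3
section Infra4
set_option linter.unusedSectionVars false
variable {T : ℕ} {X Y U : Type*} [Fintype X] [Fintype Y] [Fintype U]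
  [DecidableEq X] [DecidableEq Y] [DecidableEq U]

namespace CHMM
variable (M : CHMM T X Y U)

lemma prob_shuffle {α β γ : Type*} [DecidableEq α] [DecidableEq β] [DecidableEq γ]
    (A : Traj T X Y U → α) (B : Traj T X Y U → β) (C : Traj T X Y U → γ)
    (a : α) (b : β) (c : γ) :
    M.prob (fun ω => (A ω, B ω, C ω)) (a, b, c)
      = M.prob (fun ω => (B ω, A ω, C ω)) (b, a, c) := by
  refine M.prob_congr _ _ _ _ fun ω => ?_
  simp only [Prod.ext_iff]
  tauto

lemma condEnt_drop {α β γ : Type*}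
    [Fintype α] [DecidableEq α] [Fintype β] [DecidableEq β] [Fintype γ] [DecidableEq γ]
    (A : Traj T X Y U → α) (B : Traj T X Y U → β) (C : Traj T X Y U → γ)
    (hCI : ∀ a b c, M.prob (fun ω => (A ω, B ω, C ω)) (a, b, c) * M.prob C c
      = M.prob (fun ω => (A ω, C ω)) (a, c) * M.prob (fun ω => (B ω, C ω)) (b, c)) :
    M.condEnt A (fun ω => (B ω, C ω)) = M.condEnt A C := by
  set P3 : α → β → γ → ℝ := fun a b c => M.prob (fun ω => (A ω, B ω, C ω)) (a, b, c) with hP3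
  set Pbc : β → γ → ℝ := fun b c => M.prob (fun ω => (B ω, C ω)) (b, c) with hPbc
  set Pac : α → γ → ℝ := fun a c => M.prob (fun ω => (A ω, C ω)) (a, c) with hPac
  set Pc : γ → ℝ := fun c => M.prob C c with hPc
  have hmac : ∀ a c, ∑ b, P3 a b c = Pac a c := by
    intro a c
    have h1 : ∀ b, P3 a b c = M.prob (fun ω => (B ω, A ω, C ω)) (b, (a, c)) := fun b =>
      M.prob_shuffle A B C a b c
    simp only [h1]
    exact M.sum_prob_fst B (fun ω => (A ω, C ω)) (a, c)
  have h3nn : ∀ a b c, 0 ≤ P3 a b c := fun a b c => M.prob_nonneg _ _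
  have h3le : ∀ a b c, P3 a b c ≤ Pbc b c := fun a b c =>
    M.prob_pair_le A (fun ω => (B ω, C ω)) a (b, c)
  have hbcle : ∀ b c, Pbc b c ≤ Pc c := fun b c => M.prob_pair_le B C b c
  have hacnn : ∀ a c, 0 ≤ Pac a c := fun a c => M.prob_nonneg _ _
  have key : ∀ a b c, P3 a b c * Real.log (P3 a b c / Pbc b c)
      = P3 a b c * Real.log (Pac a c / Pc c) := by
    intro a b c
    rcases eq_or_lt_of_le (h3nn a b c) with h0 | hpos
    · rw [← h0]; simp
    · have hbc : 0 < Pbc b c := lt_of_lt_of_le hpos (h3le a b c)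
      have hc : 0 < Pc c := lt_of_lt_of_le hbc (hbcle b c)
      have hprod : P3 a b c * Pc c = Pac a c * Pbc b c := hCI a b c
      have hac : 0 < Pac a c := by nlinarith [hacnn a c]
      have hdiv : P3 a b c / Pbc b c = Pac a c / Pc c := by
        rw [div_eq_div_iff (ne_of_gt hbc) (ne_of_gt hc)]
        exact hprod
      rw [hdiv]
  have eL : M.condEnt A (fun ω => (B ω, C ω))
      = -∑ a, ∑ b, ∑ c, P3 a b c * Real.log (P3 a b c / Pbc b c) := by
    unfold CHMM.condEnt
    congr 1
    refine Finset.sum_congr rfl fun a _ => ?_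
    exact Fintype.sum_prod_type _
  have eR : M.condEnt A C
      = -∑ a, ∑ c, Pac a c * Real.log (Pac a c / Pc c) := rfl
  rw [eL, eR]
  simp only [key]
  congr 1
  refine Finset.sum_congr rfl fun a _ => ?_
  rw [Finset.sum_comm]
  refine Finset.sum_congr rfl fun c _ => ?_
  rw [← Finset.sum_mul, hmac]

end CHMM
end Infra4
section Infra5
set_option linter.unusedSectionVars false
variable {T : ℕ} {X Y U : Type*} [Fintype X] [Fintype Y] [Fintype U]
  [DecidableEq X] [DecidableEq Y] [DecidableEq U]

namespace CHMM
variable (M : CHMM T X Y U)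

lemma prob_triple_of_fact {α β γ δ : Type*}
    [Fintype α] [DecidableEq α] [Fintype β] [DecidableEq β] [Fintype γ] [DecidableEq γ]
    [Fintype δ]
    (A : Traj T X Y U → α) (B : Traj T X Y U → β) (C : Traj T X Y U → γ)
    (e : Traj T X Y U ≃ α × β × γ × δ)
    (hA : ∀ ω, A ω = (e ω).1) (hB : ∀ ω, B ω = (e ω).2.1) (hC : ∀ ω, C ω = (e ω).2.2.1)
    (q : α → γ → ℝ) (r : β → γ → ℝ) (k : α → β → γ → δ → ℝ)
    (hfac : ∀ a b c d, M.p (e.symm (a, b, c, d)) = q a c * r b c * k a b c d)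
    (hk : ∀ a b c, ∑ d, k a b c d = 1) :
    ∀ a b c, M.prob (fun ω => (A ω, B ω, C ω)) (a, b, c) = q a c * r b c := by
  intro a b c
  unfold CHMM.prob
  rw [← Equiv.sum_comp e.symm
    (fun ω => if (A ω, B ω, C ω) = (a, b, c) then M.p ω else 0)]
  have hcomp : ∀ x : α × β × γ × δ,
      (A (e.symm x), B (e.symm x), C (e.symm x)) = (x.1, x.2.1, x.2.2.1) := by
    intro x
    rw [hA, hB, hC, Equiv.apply_symm_apply]
  calc (∑ x : α × β × γ × δ,
        if (A (e.symm x), B (e.symm x), C (e.symm x)) = (a, b, c) then M.p (e.symm x) else 0)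
      = ∑ x : α × β × γ × δ,
        if (x.1, x.2.1, x.2.2.1) = (a, b, c) then q x.1 x.2.2.1 * r x.2.1 x.2.2.1
          * k x.1 x.2.1 x.2.2.1 x.2.2.2 else 0 := by
        refine Finset.sum_congr rfl fun x _ => ?_
        rw [hcomp x]
        have : M.p (e.symm x) = q x.1 x.2.2.1 * r x.2.1 x.2.2.1 * k x.1 x.2.1 x.2.2.1 x.2.2.2 := by
          obtain ⟨a', b', c', d'⟩ := x
          exact hfac a' b' c' d'
        rw [this]
    _ = q a c * r b c := by
        rw [Fintype.sum_prod_type]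
        simp only [Fintype.sum_prod_type, Prod.mk.injEq]
        rw [Finset.sum_eq_single a]
        · rw [Finset.sum_eq_single b]
          · rw [Finset.sum_eq_single c]
            · simp only [and_self, if_true, eq_self_iff_true, true_and]
              rw [← Finset.mul_sum, hk]
              ring
            · intro c' _ hc'
              simp [hc']
            · intro h; exact absurd (Finset.mem_univ c) h
          · intro b' _ hb'
            simp [hb']
          · intro h; exact absurd (Finset.mem_univ b) h
        · intro a' _ ha'
          simp [ha']
        · intro h; exact absurd (Finset.mem_univ a) h

lemma condEnt_drop_of_fact {α β γ δ : Type*}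
    [Fintype α] [DecidableEq α] [Fintype β] [DecidableEq β] [Fintype γ] [DecidableEq γ]
    [Fintype δ]
    (A : Traj T X Y U → α) (B : Traj T X Y U → β) (C : Traj T X Y U → γ)
    (e : Traj T X Y U ≃ α × β × γ × δ)
    (hA : ∀ ω, A ω = (e ω).1) (hB : ∀ ω, B ω = (e ω).2.1) (hC : ∀ ω, C ω = (e ω).2.2.1)
    (q : α → γ → ℝ) (r : β → γ → ℝ) (k : α → β → γ → δ → ℝ)
    (hfac : ∀ a b c d, M.p (e.symm (a, b, c, d)) = q a c * r b c * k a b c d)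
    (hk : ∀ a b c, ∑ d, k a b c d = 1) :
    M.condEnt A (fun ω => (B ω, C ω)) = M.condEnt A C := by
  have h3 := M.prob_triple_of_fact A B C e hA hB hC q r k hfac hk
  refine M.condEnt_drop A B C fun a b c => ?_
  have hbc : M.prob (fun ω => (B ω, C ω)) (b, c) = (∑ a', q a' c) * r b c := by
    rw [← M.sum_prob_fst A (fun ω => (B ω, C ω)) (b, c)]
    simp only [h3]
    rw [Finset.sum_mul]
  have hac : M.prob (fun ω => (A ω, C ω)) (a, c) = q a c * (∑ b', r b' c) := by
    rw [← M.sum_prob_fst B (fun ω => (A ω, C ω)) (a, c)]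
    have : ∀ b', M.prob (fun ω => (B ω, A ω, C ω)) (b', (a, c))
        = M.prob (fun ω => (A ω, B ω, C ω)) (a, b', c) :=
      fun b' => (M.prob_shuffle A B C a b' c).symm
    simp only [this, h3]
    rw [← Finset.mul_sum]
  have hc : M.prob C c = (∑ a', q a' c) * (∑ b', r b' c) := by
    rw [← M.sum_prob_fst B C c]
    have : ∀ b', M.prob (fun ω => (B ω, C ω)) (b', c) = (∑ a', q a' c) * r b' c := by
      intro b'
      rw [← M.sum_prob_fst A (fun ω => (B ω, C ω)) (b', c)]
      simp only [h3]
      rw [Finset.sum_mul]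
    simp only [this]
    rw [← Finset.mul_sum]
  rw [h3, hbc, hac, hc]
  ring

end CHMM
end Infra5
section Apply
set_option linter.unusedSectionVars false

lemma snoc_congr_lt {n : ℕ} {α : Type*} (w : Fin n → α) (x x' : α) (i : Fin (n + 1))
    (h : (i : ℕ) < n) :
    (Fin.snoc w x : Fin (n + 1) → α) i = (Fin.snoc w x' : Fin (n + 1) → α) i := by
  have h' : i ≠ Fin.last n := by
    intro he; rw [he] at h; exact absurd h (lt_irrefl _)
  have h'' : i ≠ Fin.last n := by
    intro he; rw [he] at h; exact absurd h (lt_irrefl _)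
  obtain ⟨j, rfl⟩ := Fin.exists_castSucc_eq.2 h''
  simp

lemma snoc_val_lt {n : ℕ} {α : Type*} (w : Fin n → α) (x : α) (i : Fin (n + 1))
    (h' : i ≠ Fin.last n) :
    (Fin.snoc w x : Fin (n + 1) → α) i = w (i.castPred h') := by
  obtain ⟨j, rfl⟩ := Fin.exists_castSucc_eq.2 h'
  simp

end Apply
section Step2
set_option linter.unusedSectionVars false
variable {S : ℕ} {X Y U : Type*} [Fintype X] [Fintype Y] [Fintype U]
  [DecidableEq X] [DecidableEq Y] [DecidableEq U]

/-- Reshuffling equivalence for step 2 (dropping `Y_T`). -/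
def eqv2 (S : ℕ) (X Y U : Type*) :
    Traj (S + 1) X Y U ≃
      ((Fin (S + 1) → X) × Y × (X × ((Fin (S + 1) → Y) × (Fin (S + 1) → U))) × Unit) where
  toFun ω := (fun i => ω.1 i.castSucc, ω.2.1 (Fin.last (S + 1)),
    (ω.1 (Fin.last (S + 1)), (fun i => ω.2.1 i.castSucc, ω.2.2)), ())
  invFun x := (Fin.snoc x.1 x.2.2.1.1, Fin.snoc x.2.2.1.2.1 x.2.1, x.2.2.1.2.2)
  left_inv ω := by
    obtain ⟨xs, ys, us⟩ := ω
    refine Prod.ext ?_ (Prod.ext ?_ rfl) <;> dsimp <;> funext i <;>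
      cases i using Fin.lastCases <;> simp
  right_inv x := by
    obtain ⟨a, b, ⟨xT, yp, us⟩, d⟩ := x
    refine Prod.ext ?_ (Prod.ext ?_ (Prod.ext (Prod.ext ?_ (Prod.ext ?_ rfl)) rfl))
    · funext i; simp
    · simp
    · simp
    · funext i; simp

variable (M : CHMM (S + 1) X Y U)

/-- `q` factor for step 2. -/
noncomputable def q2 (y0 : Y) (a : Fin (S + 1) → X)
    (c : X × ((Fin (S + 1) → Y) × (Fin (S + 1) → U))) : ℝ :=
  M.p0 ((Fin.snoc a c.1 : Fin (S + 2) → X) 0) *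
    M.g0 ((Fin.snoc c.2.1 y0 : Fin (S + 2) → Y) 0) ((Fin.snoc a c.1 : Fin (S + 2) → X) 0) *
    (∏ t : Fin (S + 1), (M.pol t (c.2.2 t) (Fin.snoc c.2.1 y0) c.2.2 *
      M.f t ((Fin.snoc a c.1 : Fin (S + 2) → X) t.succ)
        ((Fin.snoc a c.1 : Fin (S + 2) → X) t.castSucc) (c.2.2 t))) *
    ∏ t : Fin S, M.g t.castSucc ((Fin.snoc c.2.1 y0 : Fin (S + 2) → Y) t.castSucc.succ)
      ((Fin.snoc a c.1 : Fin (S + 2) → X) t.castSucc.succ) (c.2.2 t.castSucc)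

/-- `r` factor for step 2. -/
noncomputable def r2 (b : Y) (c : X × ((Fin (S + 1) → Y) × (Fin (S + 1) → U))) : ℝ :=
  M.g (Fin.last S) b c.1 (c.2.2 (Fin.last S))

lemma fact2 (y0 : Y) (a : Fin (S + 1) → X) (b : Y)
    (c : X × ((Fin (S + 1) → Y) × (Fin (S + 1) → U))) (d : Unit) :
    M.p ((eqv2 S X Y U).symm (a, b, c, d)) = q2 M y0 a c * r2 M b c * 1 := by
  show M.p (Fin.snoc a c.1, Fin.snoc c.2.1 b, c.2.2) = _
  unfold CHMM.p q2 r2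
  dsimp only
  have hpol : ∀ t : Fin (S + 1),
      M.pol t (c.2.2 t) (Fin.snoc c.2.1 b) c.2.2
        = M.pol t (c.2.2 t) (Fin.snoc c.2.1 y0) c.2.2 := fun t =>
    M.pol_causal t _ _ _ _ _
      (fun i hi => snoc_congr_lt _ _ _ i (by have := t.isLt; omega))
      (fun i _ => rfl)
  have hg0 : (Fin.snoc c.2.1 b : Fin (S + 2) → Y) 0
      = (Fin.snoc c.2.1 y0 : Fin (S + 2) → Y) 0 :=
    snoc_congr_lt _ _ _ _ (by simp)
  have hprod : (∏ t : Fin (S + 1),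
      (M.pol t (c.2.2 t) (Fin.snoc c.2.1 b) c.2.2 *
        M.f t ((Fin.snoc a c.1 : Fin (S + 2) → X) t.succ)
          ((Fin.snoc a c.1 : Fin (S + 2) → X) t.castSucc) (c.2.2 t) *
        M.g t ((Fin.snoc c.2.1 b : Fin (S + 2) → Y) t.succ)
          ((Fin.snoc a c.1 : Fin (S + 2) → X) t.succ) (c.2.2 t)))
      = (∏ t : Fin (S + 1), (M.pol t (c.2.2 t) (Fin.snoc c.2.1 y0) c.2.2 *
          M.f t ((Fin.snoc a c.1 : Fin (S + 2) → X) t.succ)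
            ((Fin.snoc a c.1 : Fin (S + 2) → X) t.castSucc) (c.2.2 t))) *
        ((∏ t : Fin S, M.g t.castSucc
            ((Fin.snoc c.2.1 y0 : Fin (S + 2) → Y) t.castSucc.succ)
            ((Fin.snoc a c.1 : Fin (S + 2) → X) t.castSucc.succ) (c.2.2 t.castSucc)) *
          M.g (Fin.last S) b c.1 (c.2.2 (Fin.last S))) := by
    rw [Finset.prod_mul_distrib]
    congr 1
    · exact Finset.prod_congr rfl fun t _ => by rw [hpol t]
    · rw [Fin.prod_univ_castSucc]
      congr 1
      · refine Finset.prod_congr rfl fun t _ => ?_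
        congr 1
        exact snoc_congr_lt _ _ _ _ (by have := t.isLt; simp only [Fin.val_succ, Fin.coe_castSucc]; omega)
      · rw [Fin.succ_last, Fin.snoc_last, Fin.snoc_last]
  rw [hprod, hg0]
  ring

end Step2
section Psi2
/-- Reshuffle of the conditioning tuple for step 2. -/
def psi2 (S : ℕ) (X Y U : Type*) :
    (X × ((Fin (S + 2) → Y) × (Fin (S + 1) → U)))
      ≃ (Y × (X × ((Fin (S + 1) → Y) × (Fin (S + 1) → U)))) where
  toFun p := (p.2.1 (Fin.last (S + 1)), (p.1, (fun i => p.2.1 i.castSucc, p.2.2)))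
  invFun x := (x.2.1, (Fin.snoc x.2.2.1 x.1, x.2.2.2))
  left_inv p := by
    obtain ⟨x, yf, u⟩ := p
    refine Prod.ext rfl (Prod.ext ?_ rfl)
    dsimp
    funext i
    cases i using Fin.lastCases <;> simp
  right_inv x := by
    obtain ⟨yT, x', yp, u⟩ := x
    refine Prod.ext ?_ (Prod.ext rfl (Prod.ext ?_ rfl))
    · simp
    · dsimp; funext i; simp
end Psi2
section Step4
set_option linter.unusedSectionVars false
variable {S : ℕ} {X Y U : Type*} [Fintype X] [Fintype Y] [Fintype U]
  [DecidableEq X] [DecidableEq Y] [DecidableEq U]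

/-- Reshuffling equivalence for step 4 (dropping `U_{T-1}`). -/
def eqv4 (S : ℕ) (X Y U : Type*) :
    Traj (S + 1) X Y U ≃
      ((Fin (S + 1) → X) × U × ((Fin (S + 1) → Y) × (Fin S → U)) × (X × Y)) where
  toFun ω := (fun i => ω.1 i.castSucc, ω.2.2 (Fin.last S),
    ((fun i => ω.2.1 i.castSucc), fun i => ω.2.2 i.castSucc),
    (ω.1 (Fin.last (S + 1)), ω.2.1 (Fin.last (S + 1))))
  invFun x := (Fin.snoc x.1 x.2.2.2.1, Fin.snoc x.2.2.1.1 x.2.2.2.2, Fin.snoc x.2.2.1.2 x.2.1)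
  left_inv ω := by
    obtain ⟨xs, ys, us⟩ := ω
    refine Prod.ext ?_ (Prod.ext ?_ ?_) <;> dsimp <;> funext i <;>
      cases i using Fin.lastCases <;> simp
  right_inv x := by
    obtain ⟨a, b, ⟨yp, up⟩, ⟨xT, yT⟩⟩ := x
    refine Prod.ext ?_ (Prod.ext ?_ (Prod.ext (Prod.ext ?_ ?_) (Prod.ext ?_ ?_)))
    · funext i; simp
    · simp
    · funext i; simp
    · funext i; simp
    · simp
    · simp

variable (M : CHMM (S + 1) X Y U)

/-- `q` factor for step 4. -/
noncomputable def q4 (x0 : X) (y0 : Y) (u0 : U) (a : Fin (S + 1) → X)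
    (c : (Fin (S + 1) → Y) × (Fin S → U)) : ℝ :=
  M.p0 ((Fin.snoc a x0 : Fin (S + 2) → X) 0) *
    M.g0 ((Fin.snoc c.1 y0 : Fin (S + 2) → Y) 0) ((Fin.snoc a x0 : Fin (S + 2) → X) 0) *
    ∏ t : Fin S,
      (M.pol t.castSucc ((Fin.snoc c.2 u0 : Fin (S + 1) → U) t.castSucc)
          (Fin.snoc c.1 y0) (Fin.snoc c.2 u0) *
        M.f t.castSucc ((Fin.snoc a x0 : Fin (S + 2) → X) t.castSucc.succ)
          ((Fin.snoc a x0 : Fin (S + 2) → X) t.castSucc.castSucc)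
          ((Fin.snoc c.2 u0 : Fin (S + 1) → U) t.castSucc) *
        M.g t.castSucc ((Fin.snoc c.1 y0 : Fin (S + 2) → Y) t.castSucc.succ)
          ((Fin.snoc a x0 : Fin (S + 2) → X) t.castSucc.succ)
          ((Fin.snoc c.2 u0 : Fin (S + 1) → U) t.castSucc))

/-- `r` factor for step 4. -/
noncomputable def r4 (y0 : Y) (b : U) (c : (Fin (S + 1) → Y) × (Fin S → U)) : ℝ :=
  M.pol (Fin.last S) b (Fin.snoc c.1 y0) (Fin.snoc c.2 b)

/-- `k` factor for step 4. -/
noncomputable def k4 (a : Fin (S + 1) → X) (b : U)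
    (c : (Fin (S + 1) → Y) × (Fin S → U)) (d : X × Y) : ℝ :=
  M.f (Fin.last S) d.1 (a (Fin.last S)) b * M.g (Fin.last S) d.2 d.1 b

lemma k4_sum (a : Fin (S + 1) → X) (b : U) (c : (Fin (S + 1) → Y) × (Fin S → U)) :
    ∑ d : X × Y, k4 M a b c d = 1 := by
  unfold k4
  rw [Fintype.sum_prod_type]
  have : ∀ x : X, ∑ y : Y, M.f (Fin.last S) x (a (Fin.last S)) b * M.g (Fin.last S) y x b
      = M.f (Fin.last S) x (a (Fin.last S)) b := by
    intro x
    rw [← Finset.mul_sum, M.g_sum, mul_one]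
  simp only [this]
  exact M.f_sum _ _ _

lemma fact4 (x0 : X) (y0 : Y) (u0 : U) (a : Fin (S + 1) → X) (b : U)
    (c : (Fin (S + 1) → Y) × (Fin S → U)) (d : X × Y) :
    M.p ((eqv4 S X Y U).symm (a, b, c, d))
      = q4 M x0 y0 u0 a c * r4 M y0 b c * k4 M a b c d := by
  show M.p (Fin.snoc a d.1, Fin.snoc c.1 d.2, Fin.snoc c.2 b) = _
  unfold CHMM.p q4 r4 k4
  dsimp only
  rw [Fin.prod_univ_castSucc]
  have e_us : ∀ t : Fin S, (Fin.snoc c.2 b : Fin (S + 1) → U) t.castSucc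
      = (Fin.snoc c.2 u0 : Fin (S + 1) → U) t.castSucc := fun t =>
    snoc_congr_lt _ _ _ _ (by have := t.isLt; simp only [Fin.coe_castSucc]; omega)
  have e_xs1 : ∀ t : Fin S, (Fin.snoc a d.1 : Fin (S + 2) → X) t.castSucc.succ
      = (Fin.snoc a x0 : Fin (S + 2) → X) t.castSucc.succ := fun t =>
    snoc_congr_lt _ _ _ _ (by have := t.isLt; simp only [Fin.val_succ, Fin.coe_castSucc]; omega)
  have e_xs2 : ∀ t : Fin S, (Fin.snoc a d.1 : Fin (S + 2) → X) t.castSucc.castSucc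
      = (Fin.snoc a x0 : Fin (S + 2) → X) t.castSucc.castSucc := fun t =>
    snoc_congr_lt _ _ _ _ (by have := t.isLt; simp only [Fin.coe_castSucc]; omega)
  have e_ys1 : ∀ t : Fin S, (Fin.snoc c.1 d.2 : Fin (S + 2) → Y) t.castSucc.succ
      = (Fin.snoc c.1 y0 : Fin (S + 2) → Y) t.castSucc.succ := fun t =>
    snoc_congr_lt _ _ _ _ (by have := t.isLt; simp only [Fin.val_succ, Fin.coe_castSucc]; omega)
  have e_xs0 : (Fin.snoc a d.1 : Fin (S + 2) → X) 0 = (Fin.snoc a x0 : Fin (S + 2) → X) 0 :=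
    snoc_congr_lt _ _ _ _ (by simp)
  have e_ys0 : (Fin.snoc c.1 d.2 : Fin (S + 2) → Y) 0 = (Fin.snoc c.1 y0 : Fin (S + 2) → Y) 0 :=
    snoc_congr_lt _ _ _ _ (by simp)
  have hpolt : ∀ (t : Fin S) (v : U),
      M.pol t.castSucc v (Fin.snoc c.1 d.2) (Fin.snoc c.2 b)
        = M.pol t.castSucc v (Fin.snoc c.1 y0) (Fin.snoc c.2 u0) := fun t v =>
    M.pol_causal _ _ _ _ _ _
      (fun i hi => snoc_congr_lt _ _ _ i (by have := t.isLt; simp only [Fin.coe_castSucc] at hi; omega))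
      (fun i hi => snoc_congr_lt _ _ _ i (by have := t.isLt; simp only [Fin.coe_castSucc] at hi; omega))
  have hpollast :
      M.pol (Fin.last S) ((Fin.snoc c.2 b : Fin (S + 1) → U) (Fin.last S))
          (Fin.snoc c.1 d.2) (Fin.snoc c.2 b)
        = M.pol (Fin.last S) b (Fin.snoc c.1 y0) (Fin.snoc c.2 b) := by
    rw [Fin.snoc_last]
    exact M.pol_causal _ _ _ _ _ _
      (fun i hi => snoc_congr_lt _ _ _ i (by have := i.isLt; omega))
      (fun i _ => rfl)
  have hprod : (∏ t : Fin S,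
      (M.pol t.castSucc ((Fin.snoc c.2 b : Fin (S + 1) → U) t.castSucc)
          (Fin.snoc c.1 d.2) (Fin.snoc c.2 b) *
        M.f t.castSucc ((Fin.snoc a d.1 : Fin (S + 2) → X) t.castSucc.succ)
          ((Fin.snoc a d.1 : Fin (S + 2) → X) t.castSucc.castSucc)
          ((Fin.snoc c.2 b : Fin (S + 1) → U) t.castSucc) *
        M.g t.castSucc ((Fin.snoc c.1 d.2 : Fin (S + 2) → Y) t.castSucc.succ)
          ((Fin.snoc a d.1 : Fin (S + 2) → X) t.castSucc.succ)
          ((Fin.snoc c.2 b : Fin (S + 1) → U) t.castSucc)))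
      = ∏ t : Fin S,
      (M.pol t.castSucc ((Fin.snoc c.2 u0 : Fin (S + 1) → U) t.castSucc)
          (Fin.snoc c.1 y0) (Fin.snoc c.2 u0) *
        M.f t.castSucc ((Fin.snoc a x0 : Fin (S + 2) → X) t.castSucc.succ)
          ((Fin.snoc a x0 : Fin (S + 2) → X) t.castSucc.castSucc)
          ((Fin.snoc c.2 u0 : Fin (S + 1) → U) t.castSucc) *
        M.g t.castSucc ((Fin.snoc c.1 y0 : Fin (S + 2) → Y) t.castSucc.succ)
          ((Fin.snoc a x0 : Fin (S + 2) → X) t.castSucc.succ)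
          ((Fin.snoc c.2 u0 : Fin (S + 1) → U) t.castSucc)) := by
    refine Finset.prod_congr rfl fun t _ => ?_
    rw [hpolt t, e_us t, e_xs1 t, e_xs2 t, e_ys1 t]
  have e_last_f :
      M.f (Fin.last S) ((Fin.snoc a d.1 : Fin (S + 2) → X) (Fin.last S).succ)
          ((Fin.snoc a d.1 : Fin (S + 2) → X) (Fin.last S).castSucc)
          ((Fin.snoc c.2 b : Fin (S + 1) → U) (Fin.last S))
        = M.f (Fin.last S) d.1 (a (Fin.last S)) b := by
    rw [Fin.succ_last, Fin.snoc_last, Fin.snoc_last, Fin.snoc_castSucc]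
  have e_last_g :
      M.g (Fin.last S) ((Fin.snoc c.1 d.2 : Fin (S + 2) → Y) (Fin.last S).succ)
          ((Fin.snoc a d.1 : Fin (S + 2) → X) (Fin.last S).succ)
          ((Fin.snoc c.2 b : Fin (S + 1) → U) (Fin.last S))
        = M.g (Fin.last S) d.2 d.1 b := by
    rw [Fin.succ_last, Fin.snoc_last, Fin.snoc_last, Fin.snoc_last]
  rw [hprod, hpollast, e_last_f, e_last_g, e_xs0, e_ys0]
  ring

end Step4

section Psi4
/-- Reshuffle of the conditioning tuple for step 4. -/
def psi4 (S : ℕ) (Y U : Type*) :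
    ((Fin (S + 1) → Y) × (Fin (S + 1) → U))
      ≃ (U × ((Fin (S + 1) → Y) × (Fin S → U))) where
  toFun p := (p.2 (Fin.last S), (p.1, fun i => p.2 i.castSucc))
  invFun x := (x.2.1, Fin.snoc x.2.2 x.1)
  left_inv p := by
    obtain ⟨ys, us⟩ := p
    refine Prod.ext rfl ?_
    dsimp
    funext i
    cases i using Fin.lastCases <;> simp
  right_inv x := by
    obtain ⟨uS, ys, up⟩ := x
    refine Prod.ext ?_ (Prod.ext rfl ?_)
    · simp
    · dsimp; funext i; simp
end Psi4
section Step5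
set_option linter.unusedSectionVars false
variable {S : ℕ} {X Y U : Type*} [Fintype X] [Fintype Y] [Fintype U]
  [DecidableEq X] [DecidableEq Y] [DecidableEq U]

/-- Reshuffling equivalence for step 5 (Markov property). -/
def eqv5 (S : ℕ) (X Y U : Type*) :
    Traj (S + 1) X Y U ≃
      (X × ((Fin S → X) × (Fin (S + 1) → Y) × (Fin S → U)) × (X × U) × Y) where
  toFun ω := (ω.1 (Fin.last (S + 1)),
    ((fun i => ω.1 i.castSucc.castSucc), (fun i => ω.2.1 i.castSucc), fun i => ω.2.2 i.castSucc),
    (ω.1 (Fin.last S).castSucc, ω.2.2 (Fin.last S)), ω.2.1 (Fin.last (S + 1)))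
  invFun x := (Fin.snoc (Fin.snoc x.2.1.1 x.2.2.1.1) x.1,
    Fin.snoc x.2.1.2.1 x.2.2.2, Fin.snoc x.2.1.2.2 x.2.2.1.2)
  left_inv ω := by
    obtain ⟨xs, ys, us⟩ := ω
    refine Prod.ext ?_ (Prod.ext ?_ ?_) <;> dsimp <;> funext i
    · cases i using Fin.lastCases with
      | last => simp
      | cast j =>
        simp only [Fin.snoc_castSucc]
        cases j using Fin.lastCases with
        | last => simp
        | cast k => simp
    · cases i using Fin.lastCases <;> simp
    · cases i using Fin.lastCases <;> simp
  right_inv x := by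
    obtain ⟨xT, ⟨xp, yp, up⟩, ⟨xS, uS⟩, yT⟩ := x
    refine Prod.ext ?_ (Prod.ext (Prod.ext ?_ (Prod.ext ?_ ?_)) (Prod.ext (Prod.ext ?_ ?_) ?_))
    · simp
    · funext i; simp [Fin.snoc_castSucc]
    · funext i; simp
    · funext i; simp
    · simp [Fin.snoc_castSucc]
    · simp
    · simp

variable (M : CHMM (S + 1) X Y U)

/-- `q` factor for step 5. -/
noncomputable def q5 (a : X) (c : X × U) : ℝ :=
  M.f (Fin.last S) a c.1 c.2

/-- `r` factor for step 5. -/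
noncomputable def r5 (x0 : X) (y0 : Y)
    (b : (Fin S → X) × (Fin (S + 1) → Y) × (Fin S → U)) (c : X × U) : ℝ :=
  M.p0 ((Fin.snoc (Fin.snoc b.1 c.1) x0 : Fin (S + 2) → X) 0) *
    M.g0 ((Fin.snoc b.2.1 y0 : Fin (S + 2) → Y) 0)
      ((Fin.snoc (Fin.snoc b.1 c.1) x0 : Fin (S + 2) → X) 0) *
    (∏ t : Fin S,
      (M.pol t.castSucc ((Fin.snoc b.2.2 c.2 : Fin (S + 1) → U) t.castSucc)
          (Fin.snoc b.2.1 y0) (Fin.snoc b.2.2 c.2) *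
        M.f t.castSucc ((Fin.snoc (Fin.snoc b.1 c.1) x0 : Fin (S + 2) → X) t.castSucc.succ)
          ((Fin.snoc (Fin.snoc b.1 c.1) x0 : Fin (S + 2) → X) t.castSucc.castSucc)
          ((Fin.snoc b.2.2 c.2 : Fin (S + 1) → U) t.castSucc) *
        M.g t.castSucc ((Fin.snoc b.2.1 y0 : Fin (S + 2) → Y) t.castSucc.succ)
          ((Fin.snoc (Fin.snoc b.1 c.1) x0 : Fin (S + 2) → X) t.castSucc.succ)
          ((Fin.snoc b.2.2 c.2 : Fin (S + 1) → U) t.castSucc))) *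
    M.pol (Fin.last S) ((Fin.snoc b.2.2 c.2 : Fin (S + 1) → U) (Fin.last S))
      (Fin.snoc b.2.1 y0) (Fin.snoc b.2.2 c.2)

/-- `k` factor for step 5. -/
noncomputable def k5 (a : X) (b : (Fin S → X) × (Fin (S + 1) → Y) × (Fin S → U))
    (c : X × U) (d : Y) : ℝ :=
  M.g (Fin.last S) d a c.2

lemma k5_sum (a : X) (b : (Fin S → X) × (Fin (S + 1) → Y) × (Fin S → U)) (c : X × U) :
    ∑ d : Y, k5 M a b c d = 1 := M.g_sum _ _ _

lemma fact5 (x0 : X) (y0 : Y) (a : X)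
    (b : (Fin S → X) × (Fin (S + 1) → Y) × (Fin S → U)) (c : X × U) (d : Y) :
    M.p ((eqv5 S X Y U).symm (a, b, c, d))
      = q5 M a c * r5 M x0 y0 b c * k5 M a b c d := by
  show M.p (Fin.snoc (Fin.snoc b.1 c.1) a, Fin.snoc b.2.1 d, Fin.snoc b.2.2 c.2) = _
  unfold CHMM.p q5 r5 k5
  dsimp only
  rw [Fin.prod_univ_castSucc]
  have e_xs0 : (Fin.snoc (Fin.snoc b.1 c.1) a : Fin (S + 2) → X) 0
      = (Fin.snoc (Fin.snoc b.1 c.1) x0 : Fin (S + 2) → X) 0 :=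
    snoc_congr_lt _ _ _ _ (by simp)
  have e_ys0 : (Fin.snoc b.2.1 d : Fin (S + 2) → Y) 0
      = (Fin.snoc b.2.1 y0 : Fin (S + 2) → Y) 0 :=
    snoc_congr_lt _ _ _ _ (by simp)
  have e_xs1 : ∀ t : Fin S, (Fin.snoc (Fin.snoc b.1 c.1) a : Fin (S + 2) → X) t.castSucc.succ
      = (Fin.snoc (Fin.snoc b.1 c.1) x0 : Fin (S + 2) → X) t.castSucc.succ := fun t =>
    snoc_congr_lt _ _ _ _ (by have := t.isLt; simp only [Fin.val_succ, Fin.coe_castSucc]; omega)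
  have e_xs2 : ∀ t : Fin S, (Fin.snoc (Fin.snoc b.1 c.1) a : Fin (S + 2) → X) t.castSucc.castSucc
      = (Fin.snoc (Fin.snoc b.1 c.1) x0 : Fin (S + 2) → X) t.castSucc.castSucc := fun t =>
    snoc_congr_lt _ _ _ _ (by have := t.isLt; simp only [Fin.coe_castSucc]; omega)
  have e_ys1 : ∀ t : Fin S, (Fin.snoc b.2.1 d : Fin (S + 2) → Y) t.castSucc.succ
      = (Fin.snoc b.2.1 y0 : Fin (S + 2) → Y) t.castSucc.succ := fun t =>
    snoc_congr_lt _ _ _ _ (by have := t.isLt; simp only [Fin.val_succ, Fin.coe_castSucc]; omega)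
  have hpolt : ∀ (t : Fin (S + 1)) (v : U),
      M.pol t v (Fin.snoc b.2.1 d) (Fin.snoc b.2.2 c.2)
        = M.pol t v (Fin.snoc b.2.1 y0) (Fin.snoc b.2.2 c.2) := fun t v =>
    M.pol_causal _ _ _ _ _ _
      (fun i hi => snoc_congr_lt _ _ _ i (by have := t.isLt; omega))
      (fun i _ => rfl)
  have hprod : (∏ t : Fin S,
      (M.pol t.castSucc ((Fin.snoc b.2.2 c.2 : Fin (S + 1) → U) t.castSucc)
          (Fin.snoc b.2.1 d) (Fin.snoc b.2.2 c.2) *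
        M.f t.castSucc ((Fin.snoc (Fin.snoc b.1 c.1) a : Fin (S + 2) → X) t.castSucc.succ)
          ((Fin.snoc (Fin.snoc b.1 c.1) a : Fin (S + 2) → X) t.castSucc.castSucc)
          ((Fin.snoc b.2.2 c.2 : Fin (S + 1) → U) t.castSucc) *
        M.g t.castSucc ((Fin.snoc b.2.1 d : Fin (S + 2) → Y) t.castSucc.succ)
          ((Fin.snoc (Fin.snoc b.1 c.1) a : Fin (S + 2) → X) t.castSucc.succ)
          ((Fin.snoc b.2.2 c.2 : Fin (S + 1) → U) t.castSucc)))
      = ∏ t : Fin S,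
      (M.pol t.castSucc ((Fin.snoc b.2.2 c.2 : Fin (S + 1) → U) t.castSucc)
          (Fin.snoc b.2.1 y0) (Fin.snoc b.2.2 c.2) *
        M.f t.castSucc ((Fin.snoc (Fin.snoc b.1 c.1) x0 : Fin (S + 2) → X) t.castSucc.succ)
          ((Fin.snoc (Fin.snoc b.1 c.1) x0 : Fin (S + 2) → X) t.castSucc.castSucc)
          ((Fin.snoc b.2.2 c.2 : Fin (S + 1) → U) t.castSucc) *
        M.g t.castSucc ((Fin.snoc b.2.1 y0 : Fin (S + 2) → Y) t.castSucc.succ)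
          ((Fin.snoc (Fin.snoc b.1 c.1) x0 : Fin (S + 2) → X) t.castSucc.succ)
          ((Fin.snoc b.2.2 c.2 : Fin (S + 1) → U) t.castSucc)) := by
    refine Finset.prod_congr rfl fun t _ => ?_
    rw [hpolt, e_xs1 t, e_xs2 t, e_ys1 t]
  have e_last_f :
      M.f (Fin.last S) ((Fin.snoc (Fin.snoc b.1 c.1) a : Fin (S + 2) → X) (Fin.last S).succ)
          ((Fin.snoc (Fin.snoc b.1 c.1) a : Fin (S + 2) → X) (Fin.last S).castSucc)
          ((Fin.snoc b.2.2 c.2 : Fin (S + 1) → U) (Fin.last S))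
        = M.f (Fin.last S) a c.1 (c.2) := by
    rw [Fin.succ_last, Fin.snoc_last, Fin.snoc_castSucc, Fin.snoc_last, Fin.snoc_last]
  have e_last_g :
      M.g (Fin.last S) ((Fin.snoc b.2.1 d : Fin (S + 2) → Y) (Fin.last S).succ)
          ((Fin.snoc (Fin.snoc b.1 c.1) a : Fin (S + 2) → X) (Fin.last S).succ)
          ((Fin.snoc b.2.2 c.2 : Fin (S + 1) → U) (Fin.last S))
        = M.g (Fin.last S) d a c.2 := by
    rw [Fin.succ_last, Fin.snoc_last, Fin.snoc_last, Fin.snoc_last]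
  rw [hprod, hpolt, e_last_f, e_last_g, e_xs0, e_ys0]
  ring

end Step5

section Psi5
/-- Reshuffle of the conditioning tuple for step 5. -/
def psi5 (S : ℕ) (X Y U : Type*) :
    ((Fin (S + 1) → X) × ((Fin (S + 1) → Y) × (Fin (S + 1) → U)))
      ≃ (((Fin S → X) × (Fin (S + 1) → Y) × (Fin S → U)) × (X × U)) where
  toFun p := ((fun i => p.1 i.castSucc, p.2.1, fun i => p.2.2 i.castSucc),
    (p.1 (Fin.last S), p.2.2 (Fin.last S)))
  invFun x := (Fin.snoc x.1.1 x.2.1, (x.1.2.1, Fin.snoc x.1.2.2 x.2.2))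
  left_inv p := by
    obtain ⟨xs, ys, us⟩ := p
    refine Prod.ext ?_ (Prod.ext rfl ?_) <;> dsimp <;> funext i <;>
      cases i using Fin.lastCases <;> simp
  right_inv x := by
    obtain ⟨⟨xp, yp, up⟩, xS, uS⟩ := x
    refine Prod.ext (Prod.ext ?_ (Prod.ext rfl ?_)) (Prod.ext ?_ ?_)
    · funext i; simp
    · funext i; simp
    · simp
    · simp
end Psi5
/-- snoc as an equivalence. -/
def snocFunEquiv (n : ℕ) (α : Type*) : ((Fin n → α) × α) ≃ (Fin (n + 1) → α) where
  toFun p := Fin.snoc p.1 p.2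
  invFun v := (Fin.init v, v (Fin.last n))
  left_inv p := by simp
  right_inv v := by simp

/-- One-step recursion for the smoother entropy:
`H(X^T | Y^T, U^{T-1}) = H(X^{T-1} | Y^{T-1}, U^{T-2}) + H(X_T | Y^T, U^{T-1})
  − H(X_T | Y^{T-1}, U^{T-1}) + H(X_T | X_{T-1}, U_{T-1})`. -/
theorem smoother_entropy_one_step_recursion
    {T : ℕ} {X Y U : Type*} [Fintype X] [Fintype Y] [Fintype U]
    [DecidableEq X] [DecidableEq Y] [DecidableEq U]
    (hT : 1 ≤ T) (M : CHMM T X Y U) :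
    M.condEnt (Xpref T (T + 1) le_rfl)
        (fun ω => (Ypref T (T + 1) le_rfl ω, Upref T T le_rfl ω)) =
      M.condEnt (Xpref T T (by omega))
          (fun ω => (Ypref T T (by omega) ω, Upref T (T - 1) (by omega) ω))
        + M.condEnt (Xat T T (by omega))
          (fun ω => (Ypref T (T + 1) le_rfl ω, Upref T T le_rfl ω))
        - M.condEnt (Xat T T (by omega))
          (fun ω => (Ypref T T (by omega) ω, Upref T T le_rfl ω))
        + M.condEnt (Xat T T (by omega))
          (fun ω => (Xat T (T - 1) (by omega) ω, Uat T (T - 1) (by omega) ω)) := by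
  obtain ⟨S, rfl⟩ : ∃ S, T = S + 1 := ⟨T - 1, (Nat.succ_pred_eq_of_pos hT).symm⟩
  rcases isEmpty_or_nonempty X with hX | hX
  · have : IsEmpty (Traj (S + 1) X Y U) := by infer_instance
    simp [M.condEnt_empty]
  rcases isEmpty_or_nonempty Y with hY | hY
  · have : IsEmpty (Traj (S + 1) X Y U) := by infer_instance
    simp [M.condEnt_empty]
  rcases isEmpty_or_nonempty U with hU | hU
  · have : IsEmpty (Traj (S + 1) X Y U) := by infer_instance
    simp [M.condEnt_empty]
  obtain ⟨x0⟩ := hX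
  obtain ⟨y0⟩ := hY
  obtain ⟨u0⟩ := hU
  -- abbreviations
  have hsnoc : ∀ ω : Traj (S + 1) X Y U,
      Xpref (S + 1) (S + 1 + 1) le_rfl ω
        = (snocFunEquiv (S + 1) X)
            (Xpref (S + 1) (S + 1) (by omega) ω, Xat (S + 1) (S + 1) (by omega) ω) := by
    intro ω
    funext i
    cases i using Fin.lastCases with
    | last => simp [snocFunEquiv, Xpref, Xat]; rfl
    | cast j => simp [snocFunEquiv, Xpref]; rfl
  have h1 : M.condEnt (Xpref (S + 1) (S + 1 + 1) le_rfl)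
        (fun ω => (Ypref (S + 1) (S + 1 + 1) le_rfl ω, Upref (S + 1) (S + 1) le_rfl ω))
      = M.condEnt
        (fun ω => (Xpref (S + 1) (S + 1) (by omega) ω, Xat (S + 1) (S + 1) (by omega) ω))
        (fun ω => (Ypref (S + 1) (S + 1 + 1) le_rfl ω, Upref (S + 1) (S + 1) le_rfl ω)) :=
    M.condEnt_congr _ _ _ _ (snocFunEquiv (S + 1) X) (Equiv.refl _) hsnoc (fun ω => rfl)
  have h2 := M.condEnt_chain (Xpref (S + 1) (S + 1) (by omega))
    (Xat (S + 1) (S + 1) (by omega))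
    (fun ω => (Ypref (S + 1) (S + 1 + 1) le_rfl ω, Upref (S + 1) (S + 1) le_rfl ω))
  -- step 2 : drop Y_T from the conditioning
  have h3 : M.condEnt (Xpref (S + 1) (S + 1) (by omega))
        (fun ω => (Xat (S + 1) (S + 1) (by omega) ω,
          (Ypref (S + 1) (S + 1 + 1) le_rfl ω, Upref (S + 1) (S + 1) le_rfl ω)))
      = M.condEnt (Xpref (S + 1) (S + 1) (by omega))
        (fun ω => (Xat (S + 1) (S + 1) (by omega) ω,
          (Ypref (S + 1) (S + 1) (by omega) ω, Upref (S + 1) (S + 1) le_rfl ω))) := by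
    have hcongr : M.condEnt (Xpref (S + 1) (S + 1) (by omega))
          (fun ω => (Yat (S + 1) (S + 1) (by omega) ω,
            (Xat (S + 1) (S + 1) (by omega) ω,
              (Ypref (S + 1) (S + 1) (by omega) ω, Upref (S + 1) (S + 1) le_rfl ω))))
        = M.condEnt (Xpref (S + 1) (S + 1) (by omega))
          (fun ω => (Xat (S + 1) (S + 1) (by omega) ω,
            (Ypref (S + 1) (S + 1 + 1) le_rfl ω, Upref (S + 1) (S + 1) le_rfl ω))) :=
      M.condEnt_congr _ _ _ _ (Equiv.refl _) (psi2 S X Y U) (fun _ => rfl) (fun _ => rfl)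
    have hdrop := M.condEnt_drop_of_fact (Xpref (S + 1) (S + 1) (by omega))
      (Yat (S + 1) (S + 1) (by omega))
      (fun ω => (Xat (S + 1) (S + 1) (by omega) ω,
        (Ypref (S + 1) (S + 1) (by omega) ω, Upref (S + 1) (S + 1) le_rfl ω)))
      (eqv2 S X Y U) (fun ω => rfl) (fun ω => rfl) (fun ω => rfl)
      (q2 M y0) (r2 M) (fun _ _ _ _ => (1 : ℝ))
      (fun a b c d => fact2 M y0 a b c d) (by intro a b c; simp)
    exact hcongr.symm.trans hdrop
  -- Bayes swap
  have hb1 := M.condEnt_chain (Xpref (S + 1) (S + 1) (by omega))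
    (Xat (S + 1) (S + 1) (by omega))
    (fun ω => (Ypref (S + 1) (S + 1) (by omega) ω, Upref (S + 1) (S + 1) le_rfl ω))
  have hb2 := M.condEnt_chain (Xat (S + 1) (S + 1) (by omega))
    (Xpref (S + 1) (S + 1) (by omega))
    (fun ω => (Ypref (S + 1) (S + 1) (by omega) ω, Upref (S + 1) (S + 1) le_rfl ω))
  have hswap : M.condEnt
        (fun ω => (Xpref (S + 1) (S + 1) (by omega) ω, Xat (S + 1) (S + 1) (by omega) ω))
        (fun ω => (Ypref (S + 1) (S + 1) (by omega) ω, Upref (S + 1) (S + 1) le_rfl ω))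
      = M.condEnt
        (fun ω => (Xat (S + 1) (S + 1) (by omega) ω, Xpref (S + 1) (S + 1) (by omega) ω))
        (fun ω => (Ypref (S + 1) (S + 1) (by omega) ω, Upref (S + 1) (S + 1) le_rfl ω)) :=
    M.condEnt_congr _ _ _ _ (Equiv.prodComm _ _) (Equiv.refl _) (fun ω => rfl) (fun ω => rfl)
  -- step 4 : drop U_{T-1} from the conditioning
  have h5 : M.condEnt (Xpref (S + 1) (S + 1) (by omega))
        (fun ω => (Ypref (S + 1) (S + 1) (by omega) ω, Upref (S + 1) (S + 1) le_rfl ω))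
      = M.condEnt (Xpref (S + 1) (S + 1) (by omega))
        (fun ω => (Ypref (S + 1) (S + 1) (by omega) ω,
          Upref (S + 1) (S + 1 - 1) (by omega) ω)) := by
    have hcongr : M.condEnt (Xpref (S + 1) (S + 1) (by omega))
          (fun ω => (Uat (S + 1) S (by omega) ω,
            (Ypref (S + 1) (S + 1) (by omega) ω, Upref (S + 1) (S + 1 - 1) (by omega) ω)))
        = M.condEnt (Xpref (S + 1) (S + 1) (by omega))
          (fun ω => (Ypref (S + 1) (S + 1) (by omega) ω, Upref (S + 1) (S + 1) le_rfl ω)) :=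
      M.condEnt_congr _ _ _ _ (Equiv.refl _) (psi4 S Y U) (fun _ => rfl) (fun _ => rfl)
    have hdrop := M.condEnt_drop_of_fact (Xpref (S + 1) (S + 1) (by omega))
      (Uat (S + 1) S (by omega))
      (fun ω => (Ypref (S + 1) (S + 1) (by omega) ω, Upref (S + 1) (S + 1 - 1) (by omega) ω))
      (eqv4 S X Y U) (fun ω => rfl) (fun ω => rfl) (fun ω => rfl)
      (q4 M x0 y0 u0) (r4 M y0) (k4 M)
      (fun a b c d => fact4 M x0 y0 u0 a b c d) (k4_sum M)
    exact hcongr.symm.trans hdrop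
  -- step 5 : Markov property
  have h6 : M.condEnt (Xat (S + 1) (S + 1) (by omega))
        (fun ω => (Xpref (S + 1) (S + 1) (by omega) ω,
          (Ypref (S + 1) (S + 1) (by omega) ω, Upref (S + 1) (S + 1) le_rfl ω)))
      = M.condEnt (Xat (S + 1) (S + 1) (by omega))
        (fun ω => (Xat (S + 1) (S + 1 - 1) (by omega) ω,
          Uat (S + 1) (S + 1 - 1) (by omega) ω)) := by
    have hcongr : M.condEnt (Xat (S + 1) (S + 1) (by omega))
          (fun ω => (((fun i : Fin S => ω.1 i.castSucc.castSucc),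
              ((fun i : Fin (S + 1) => ω.2.1 i.castSucc), fun i : Fin S => ω.2.2 i.castSucc)),
            (Xat (S + 1) (S + 1 - 1) (by omega) ω, Uat (S + 1) (S + 1 - 1) (by omega) ω)))
        = M.condEnt (Xat (S + 1) (S + 1) (by omega))
          (fun ω => (Xpref (S + 1) (S + 1) (by omega) ω,
            (Ypref (S + 1) (S + 1) (by omega) ω, Upref (S + 1) (S + 1) le_rfl ω))) :=
      M.condEnt_congr _ _ _ _ (Equiv.refl _) (psi5 S X Y U) (fun _ => rfl) (fun _ => rfl)
    have hdrop := M.condEnt_drop_of_fact (Xat (S + 1) (S + 1) (by omega))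
      (fun ω => (((fun i : Fin S => ω.1 i.castSucc.castSucc),
        ((fun i : Fin (S + 1) => ω.2.1 i.castSucc), fun i : Fin S => ω.2.2 i.castSucc))))
      (fun ω => (Xat (S + 1) (S + 1 - 1) (by omega) ω, Uat (S + 1) (S + 1 - 1) (by omega) ω))
      (eqv5 S X Y U) (fun ω => rfl) (fun ω => rfl) (fun ω => rfl)
      (q5 M) (r5 M x0 y0) (k5 M)
      (fun a b c d => fact5 M x0 y0 a b c d) (k5_sum M)
    exact hcongr.symm.trans hdrop
  linarith [h1, h2, h3, hb1, hb2, hswap, h5, h6]
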